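/- (PolyDot coefficient extraction recovers the matrix product) Let s,t ≥ 1, let A_{i,j} (0≤i<t, 0≤j<s) and B_{k,l} (0≤k<s, 0≤l<t) be blocks over a commutative ring, and let P_C(x) = (Σ_{i,j} A_{i,j} x^{tj+i})(Σ_{k,l} B_{k,l} x^{t(2s−1)l+t(s−1−k)}). Then for each 0 ≤ i, l ≤ t−1, the coefficient of x^{t(2s−1)l + t(s−1) + i} in P_C equals Σ_{k=0}^{s−1} A_{i,k} B_{k,l} = C_{i,l}. -/
import Mathlib

private lemma uniq18 {n a b c d : ℕ} (hb : b < n) (hd : d < n) (h : n*a + b = n*c + d) :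
    a = c ∧ b = d := by
  have h1 : b = d := by
    have h2 := congrArg (· % n) h
    simpa [Nat.mul_add_mod, Nat.mod_eq_of_lt hb, Nat.mod_eq_of_lt hd] using h2
  subst h1
  have : n * a = n * c := by omega
  exact ⟨Nat.eq_of_mul_eq_mul_left (by omega) this, rfl⟩

private lemma key18 (s t i j k l i' l' : ℕ) (hs : 1 ≤ s) (hi : i < t) (hi' : i' < t)
    (hj : j < s) (hk : k < s) :
    t * j + i' + (t * (2*s-1) * l' + t * (s-1-k)) = t*(2*s-1)*l + t*(s-1) + i ↔
      j = k ∧ i' = i ∧ l' = l := by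
  set u := 2*s-1 with hu
  set v := s-1-k with hv
  set w := s-1 with hw
  constructor
  · intro h
    have h2 : t * (j + u*l' + v) + i' = t * (u*l + w) + i := by
      calc t * (j + u*l' + v) + i' = t * j + i' + (t * u * l' + t * v) := by ring
        _ = t*u*l + t*w + i := h
        _ = t * (u*l + w) + i := by ring
    obtain ⟨h3, h4⟩ := uniq18 hi' hi h2
    have h5 : u * l' + (j + v) = u * l + w := by omega
    obtain ⟨h6, h7⟩ := uniq18 (show j + v < u by omega) (show w < u by omega) h5
    exact ⟨by omega, h4, h6⟩
  · rintro ⟨rfl, rfl, rfl⟩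
    have hjv : t * j + t * v = t * w := by
      have : j + v = w := by omega
      rw [← Nat.mul_add, this]
    calc t * j + i' + (t*u*l' + t*v) = t*u*l' + (t*j + t*v) + i' := by ring
      _ = t*u*l' + t*w + i' := by rw [hjv]

theorem stmt_18 {R : Type*} [CommRing R] (s t : ℕ) (hs : 1 ≤ s) (ht : 1 ≤ t)
    (A B : ℕ → ℕ → R) :
    ∀ i l : ℕ, i < t → l < t →
      Polynomial.coeff
        ((∑ i' ∈ Finset.range t, ∑ j ∈ Finset.range s,
            Polynomial.C (A i' j) * Polynomial.X ^ (t * j + i')) *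
          (∑ k ∈ Finset.range s, ∑ l' ∈ Finset.range t,
            Polynomial.C (B k l') * Polynomial.X ^ (t * (2 * s - 1) * l' + t * (s - 1 - k))))
        (t * (2 * s - 1) * l + t * (s - 1) + i) =
      ∑ k ∈ Finset.range s, A i k * B k l := by
  intro i l hi hl
  simp only [Polynomial.C_mul_X_pow_eq_monomial, Finset.sum_mul, Finset.mul_sum,
    Polynomial.monomial_mul_monomial, Polynomial.finset_sum_coeff, Polynomial.coeff_monomial]
  trans (∑ k ∈ Finset.range s, ∑ l' ∈ Finset.range t, ∑ i' ∈ Finset.range t,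
    ∑ j ∈ Finset.range s, if j = k ∧ i' = i ∧ l' = l then A i' j * B k l' else 0)
  · exact Finset.sum_congr rfl fun k hk => Finset.sum_congr rfl fun l' hl' =>
      Finset.sum_congr rfl fun i' hi' => Finset.sum_congr rfl fun j hj =>
      if_congr (key18 s t i j k l i' l' hs hi (Finset.mem_range.mp hi')
        (Finset.mem_range.mp hj) (Finset.mem_range.mp hk)) rfl rfl
  · refine Finset.sum_congr rfl fun k hk => ?_
    rw [Finset.mem_range] at hk
    simp [ite_and, Finset.sum_ite_eq', Finset.sum_ite_eq, hk, hi, hl]
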